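/- arXiv:1101.4906 — 2 statements merged into one kernel-verified Lean document; each statement's English description precedes it below -/
import Mathlib

section
/- (Bol's identity) Let M be a positive integer, γ = [[a,b],[c,d]] ∈ SL₂(ℤ), and let φ be a holomorphic function on the upper half-plane. Then the M-th derivative satisfies D^M[(cτ+d)^{M-1} φ(γτ)] = (cτ+d)^{-M-1} φ^{(M)}(γτ), where γτ = (aτ+b)/(cτ+d) and D = d/dτ. -/
open Finset

section
variable (a b c d : ℤ)

private lemma bol_jne (hdet : a * d - b * c = 1) {z : ℂ} (hz : 0 < z.im) :
    (c : ℂ) * z + d ≠ 0 := by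
  intro h0
  have him := congrArg Complex.im h0
  have hre := congrArg Complex.re h0
  simp only [Complex.add_im, Complex.mul_im, Complex.intCast_im, Complex.intCast_re,
    Complex.add_re, Complex.mul_re, Complex.zero_im, Complex.zero_re, zero_mul, mul_zero,
    add_zero, zero_add] at him hre
  have hc : (c : ℝ) = 0 := by
    rcases mul_eq_zero.mp him with h | h
    · exact h
    · exact absurd h hz.ne'
  have hc' : c = 0 := by exact_mod_cast hc
  rw [hc'] at hre
  simp at hre
  have hd' : d = 0 := by exact_mod_cast hre
  rw [hc', hd'] at hdet
  simp at hdet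

private lemma bol_gmem (hdet : a * d - b * c = 1) {z : ℂ} (hz : 0 < z.im) :
    0 < (((a : ℂ) * z + b) / ((c : ℂ) * z + d)).im := by
  have hjz := bol_jne a b c d hdet hz
  have hns : 0 < Complex.normSq ((c : ℂ) * z + d) := Complex.normSq_pos.mpr hjz
  have hdetR : (a : ℝ) * d - b * c = 1 := by exact_mod_cast hdet
  have him : (((a : ℂ) * z + b) / ((c : ℂ) * z + d)).im
      = z.im / Complex.normSq ((c : ℂ) * z + d) := by
    rw [Complex.div_im, div_sub_div_same]
    congr 1
    simp only [Complex.add_im, Complex.add_re, Complex.mul_im, Complex.mul_re,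
      Complex.intCast_im, Complex.intCast_re, zero_mul, mul_zero, add_zero, zero_add, sub_zero]
    linear_combination z.im * hdetR
  rw [him]
  exact div_pos hz hns

end

section
variable (a b c d : ℤ)

private lemma bol_lin (z : ℂ) : HasDerivAt (fun w : ℂ => (c : ℂ) * w + d) (c : ℂ) z := by
  simpa using ((hasDerivAt_id z).const_mul (c : ℂ)).add_const (d : ℂ)

private lemma bol_gderiv (hdet : a * d - b * c = 1) {z : ℂ} (hz : 0 < z.im) :
    HasDerivAt (fun w : ℂ => ((a : ℂ) * w + b) / ((c : ℂ) * w + d))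
      (((c : ℂ) * z + d) ^ (-2 : ℤ)) z := by
  have h1 : HasDerivAt (fun w : ℂ => (a : ℂ) * w + b) (a : ℂ) z := by
    simpa using ((hasDerivAt_id z).const_mul (a : ℂ)).add_const (b : ℂ)
  have hjz := bol_jne a b c d hdet hz
  have h := h1.div (bol_lin c d z) hjz
  refine h.congr_deriv ?_
  symm
  have hdetC : (a : ℂ) * d - b * c = 1 := by exact_mod_cast hdet
  have hnum : (a : ℂ) * ((c : ℂ) * z + d) - ((a : ℂ) * z + b) * c = 1 := by
    linear_combination hdetC
  rw [hnum, zpow_neg]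
  norm_num

private lemma bol_jpow (hdet : a * d - b * c = 1) (e : ℤ) {z : ℂ} (hz : 0 < z.im) :
    HasDerivAt (fun w : ℂ => ((c : ℂ) * w + d) ^ e)
      ((e : ℂ) * ((c : ℂ) * z + d) ^ (e - 1) * c) z := by
  have hjz := bol_jne a b c d hdet hz
  have h := (hasDerivAt_zpow e ((c : ℂ) * z + d) (Or.inl hjz)).comp z (bol_lin c d z)
  exact h

end


private def bolA (M : ℕ) : ℕ → ℕ → ℤ
  | 0, r => if r = 0 then 1 else 0
  | k+1, r => ((M : ℤ) - 1 - k - r) * bolA M k r +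
      (if r = 0 then 0 else bolA M k (r-1))

private lemma bolA_zero (M : ℕ) : ∀ {k r : ℕ}, k < r → bolA M k r = 0 := by
  intro k
  induction k with
  | zero =>
    intro r h
    have : r ≠ 0 := by omega
    simp [bolA, this]
  | succ k ih =>
    intro r h
    have hr : r ≠ 0 := by omega
    simp only [bolA, hr, if_false]
    rw [ih (by omega), ih (by omega)]
    ring

private lemma bolA_diag (M : ℕ) (k : ℕ) : bolA M k k = 1 := by
  induction k with
  | zero => simp [bolA]
  | succ k ih =>
    simp only [bolA, Nat.succ_ne_zero, if_false, Nat.add_sub_cancel]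
    rw [bolA_zero M (Nat.lt_succ_self k), ih]
    ring

private lemma bol_key (n k s : ℕ) (hns : s ≤ n) :
    ((k : ℤ) + 1) * (n.choose (s+1) : ℤ)
      = ((n : ℤ) - k) * (n.choose s : ℤ) + ((k : ℤ) - s) * ((n+1).choose (s+1) : ℤ) := by
  have h1 : (n.choose (s+1) : ℤ) * ((s : ℤ)+1) = (n.choose s : ℤ) * ((n : ℤ) - s) := by
    have h := congrArg (Nat.cast : ℕ → ℤ) (Nat.choose_succ_right_eq n s)
    push_cast [Nat.cast_sub hns] at h
    linarith [h]
  have h3 : (((n+1).choose (s+1) : ℕ) : ℤ) = (n.choose s : ℤ) + (n.choose (s+1) : ℤ) := by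
    rw [Nat.choose_succ_succ]; push_cast; ring
  linear_combination h1 - ((k:ℤ) - s) * h3

private lemma bolA_eq (M : ℕ) : ∀ k, ∀ r, k ≤ M → r ≤ k →
    bolA M k r = (k.descFactorial (k - r) : ℤ) * ((M - 1 - r).choose (k - r) : ℤ) := by
  intro k
  induction k with
  | zero =>
    intro r _ hr
    interval_cases r
    simp [bolA]
  | succ k ih =>
    intro r hkM hr
    rcases Nat.lt_or_ge r (k+1) with hrk | hrk
    · -- r ≤ k
      have hrk' : r ≤ k := by omega
      rcases Nat.eq_zero_or_pos r with rfl | hrpos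
      · -- r = 0
        simp only [bolA, if_true, Nat.cast_zero, sub_zero, Nat.sub_zero]
        rw [ih 0 (by omega) (by omega)]
        have hds : (k+1).descFactorial (k+1) = (k+1) * k.descFactorial k :=
          Nat.succ_descFactorial_succ k k
        rw [hds]
        simp only [Nat.sub_zero]
        have hch := congrArg (Nat.cast : ℕ → ℤ) (Nat.choose_succ_right_eq (M-1) k)
        have hcast : ((M - 1 - k : ℕ) : ℤ) = (M : ℤ) - 1 - k := by omega
        push_cast [hcast] at hch
        push_cast
        linear_combination (-(k.descFactorial k : ℤ)) * hch
      · -- 1 ≤ r ≤ k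
        have hr0 : r ≠ 0 := by omega
        simp only [bolA, hr0, if_false]
        rw [ih r (by omega) hrk', ih (r-1) (by omega) (by omega)]
        set s := k - r with hs
        set n := M - 1 - r with hn
        have e1 : k - (r-1) = s + 1 := by omega
        have e2 : M - 1 - (r-1) = n + 1 := by omega
        have e3 : k + 1 - r = s + 1 := by omega
        have e4 : (M : ℤ) - 1 - (k : ℤ) - (r : ℤ) = (n : ℤ) - (k : ℤ) := by omega
        have e5 : (k+1).descFactorial (s+1) = (k+1) * k.descFactorial s :=
          Nat.succ_descFactorial_succ k s
        have e6 : k.descFactorial (s+1) = (k - s) * k.descFactorial s :=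
          Nat.descFactorial_succ k s
        have e7 : ((k - s : ℕ) : ℤ) = (k : ℤ) - (s : ℤ) := by omega
        have hns : s ≤ n := by omega
        have key := bol_key n k s hns
        rw [e1, e2, e3, e4, e5, e6]
        push_cast [e7]
        linear_combination (-(k.descFactorial s : ℤ)) * key
    · -- r = k+1
      have : r = k + 1 := by omega
      subst this
      rw [bolA_diag]
      simp

private lemma bolA_final (M : ℕ) {r : ℕ} (h : r < M) : bolA M M r = 0 := by
  rw [bolA_eq M M r le_rfl h.le]
  have : (M - 1 - r).choose (M - r) = 0 := Nat.choose_eq_zero_of_lt (by omega)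
  simp [this]

/-- Bol's identity: for `γ = [[a,b],[c,d]] ∈ SL₂(ℤ)` and `φ` holomorphic
on the upper half-plane,
`D^M[(cτ+d)^{M-1} φ(γτ)] = (cτ+d)^{-M-1} φ^{(M)}(γτ)`. -/
theorem stmt9 (M : ℕ) (hM : 1 ≤ M) (a b c d : ℤ) (hdet : a * d - b * c = 1)
    (φ : ℂ → ℂ) (hφ : DifferentiableOn ℂ φ {z : ℂ | 0 < z.im})
    (τ : ℂ) (hτ : 0 < τ.im) :
    iteratedDerivWithin M
        (fun z => ((c : ℂ) * z + d) ^ (M - 1) * φ (((a : ℂ) * z + b) / ((c : ℂ) * z + d)))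
        {z : ℂ | 0 < z.im} τ
      = ((c : ℂ) * τ + d) ^ (-(M : ℤ) - 1)
          * iteratedDerivWithin M φ {z : ℂ | 0 < z.im}
              (((a : ℂ) * τ + b) / ((c : ℂ) * τ + d)) := by
  set S : Set ℂ := {z : ℂ | 0 < z.im} with hSdef
  have hS : IsOpen S := by
    have : S = Complex.im ⁻¹' Set.Ioi (0:ℝ) := rfl
    rw [this]
    exact isOpen_Ioi.preimage Complex.continuous_im
  have hSu : UniqueDiffOn ℂ S := hS.uniqueDiffOn
  have hφC : ContDiffOn ℂ ⊤ φ S := hφ.contDiffOn hS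
  have hψdiff : ∀ r : ℕ, DifferentiableOn ℂ (iteratedDerivWithin r φ S) S := by
    intro r
    refine hφC.differentiableOn_iteratedDerivWithin ?_ hSu
    exact_mod_cast WithTop.coe_lt_top _
  have hψ : ∀ (r : ℕ) {z : ℂ}, z ∈ S →
      HasDerivAt (iteratedDerivWithin r φ S) (iteratedDerivWithin (r+1) φ S z) z := by
    intro r z hz
    have h1 : DifferentiableAt ℂ (iteratedDerivWithin r φ S) z :=
      (hψdiff r).differentiableAt (hS.mem_nhds hz)
    have h2 := h1.hasDerivAt
    have h3 : deriv (iteratedDerivWithin r φ S) z = iteratedDerivWithin (r+1) φ S z := by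
      rw [iteratedDerivWithin_succ, derivWithin_of_isOpen hS hz]
    rwa [h3] at h2
  have main : ∀ (k : ℕ) {z : ℂ}, z ∈ S →
      iteratedDerivWithin k
        (fun w => ((c : ℂ) * w + d) ^ (M - 1) * φ (((a : ℂ) * w + b) / ((c : ℂ) * w + d))) S z
      = ∑ r ∈ Finset.range (k+1),
          (bolA M k r : ℂ) * (c : ℂ) ^ (k - r) * ((c : ℂ) * z + d) ^ ((M : ℤ) - 1 - k - r)
            * iteratedDerivWithin r φ S (((a : ℂ) * z + b) / ((c : ℂ) * z + d)) := by
    intro k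
    induction k with
    | zero =>
      intro z hz
      rw [iteratedDerivWithin_zero, show (0:ℕ)+1 = 1 from rfl, Finset.sum_range_one,
        show ((M : ℤ) - 1 - ((0:ℕ) : ℤ) - ((0:ℕ) : ℤ)) = ((M - 1 : ℕ) : ℤ) by omega,
        zpow_natCast]
      simp [bolA]
    | succ k ih =>
      intro z hz
      have hzim : 0 < z.im := hz
      have hjz : (c : ℂ) * z + d ≠ 0 := bol_jne a b c d hdet hzim
      have hgz : (((a : ℂ) * z + b) / ((c : ℂ) * z + d)) ∈ S :=
        bol_gmem a b c d hdet hzim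
      -- each summand has a derivative
      have hterm : ∀ r ∈ Finset.range (k+1),
          HasDerivAt
            (fun w => (bolA M k r : ℂ) * (c : ℂ) ^ (k - r)
                * ((c : ℂ) * w + d) ^ ((M : ℤ) - 1 - k - r)
                * iteratedDerivWithin r φ S (((a : ℂ) * w + b) / ((c : ℂ) * w + d)))
            (((M : ℂ) - 1 - k - r) * (bolA M k r : ℂ) * (c : ℂ) ^ (k + 1 - r)
                * ((c : ℂ) * z + d) ^ ((M : ℤ) - 1 - (k+1 : ℕ) - r)
                * iteratedDerivWithin r φ S (((a : ℂ) * z + b) / ((c : ℂ) * z + d))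
              + (bolA M k r : ℂ) * (c : ℂ) ^ (k + 1 - (r+1))
                * ((c : ℂ) * z + d) ^ ((M : ℤ) - 1 - (k+1 : ℕ) - (r+1 : ℕ))
                * iteratedDerivWithin (r+1) φ S (((a : ℂ) * z + b) / ((c : ℂ) * z + d))) z := by
        intro r hr
        have hrk : r ≤ k := by
          have := Finset.mem_range.mp hr; omega
        have hcomp : HasDerivAt
            (fun w => iteratedDerivWithin r φ S (((a : ℂ) * w + b) / ((c : ℂ) * w + d)))
            (iteratedDerivWithin (r+1) φ S (((a : ℂ) * z + b) / ((c : ℂ) * z + d))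
              * ((c : ℂ) * z + d) ^ (-2 : ℤ)) z :=
          by have := (hψ (r) hgz).comp z (bol_gderiv a b c d hdet hzim); exact this
        have hjp := bol_jpow a b c d hdet ((M : ℤ) - 1 - k - r) hzim
        have h := (hjp.mul hcomp).const_mul ((bolA M k r : ℂ) * (c : ℂ) ^ (k - r))
        have hfun : (fun w => (bolA M k r : ℂ) * (c : ℂ) ^ (k - r)
                * ((c : ℂ) * w + d) ^ ((M : ℤ) - 1 - k - r)
                * iteratedDerivWithin r φ S (((a : ℂ) * w + b) / ((c : ℂ) * w + d)))
            = (fun w => (bolA M k r : ℂ) * (c : ℂ) ^ (k - r)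
                * (((c : ℂ) * w + d) ^ ((M : ℤ) - 1 - k - r)
                  * iteratedDerivWithin r φ S (((a : ℂ) * w + b) / ((c : ℂ) * w + d)))) := by
          funext w; ring
        rw [hfun]
        refine h.congr_deriv ?_
        symm
        have he1 : ((M : ℤ) - 1 - k - r) - 1 = (M : ℤ) - 1 - (k+1 : ℕ) - r := by
          push_cast; ring
        have he2 : ((c : ℂ) * z + d) ^ ((M : ℤ) - 1 - k - r)
              * ((c : ℂ) * z + d) ^ (-2 : ℤ)
            = ((c : ℂ) * z + d) ^ ((M : ℤ) - 1 - (k+1 : ℕ) - (r+1 : ℕ)) := by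
          rw [← zpow_add₀ hjz]
          congr 1
          push_cast; ring
        have he3 : k + 1 - r = (k - r) + 1 := by omega
        have he4 : k + 1 - (r + 1) = k - r := by omega
        rw [he3, he4, pow_succ, ← he2, ← he1]
        push_cast
        ring
      have hEq : Set.EqOn
          (iteratedDerivWithin k
            (fun w => ((c : ℂ) * w + d) ^ (M - 1)
              * φ (((a : ℂ) * w + b) / ((c : ℂ) * w + d))) S)
          (fun w => ∑ r ∈ Finset.range (k+1),
            (bolA M k r : ℂ) * (c : ℂ) ^ (k - r) * ((c : ℂ) * w + d) ^ ((M : ℤ) - 1 - k - r)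
              * iteratedDerivWithin r φ S (((a : ℂ) * w + b) / ((c : ℂ) * w + d))) S :=
        fun w hw => ih hw
      rw [iteratedDerivWithin_succ, derivWithin_congr hEq (ih hz),
        derivWithin_of_isOpen hS hz, (HasDerivAt.fun_sum hterm).deriv]
      -- now pure Finset algebra
      have hR : ∀ r ∈ Finset.range (k+1+1),
          (bolA M (k+1) r : ℂ) * (c : ℂ) ^ (k + 1 - r)
              * ((c : ℂ) * z + d) ^ ((M : ℤ) - 1 - (k+1 : ℕ) - r)
              * iteratedDerivWithin r φ S (((a : ℂ) * z + b) / ((c : ℂ) * z + d))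
          = ((M : ℂ) - 1 - k - r) * (bolA M k r : ℂ) * (c : ℂ) ^ (k + 1 - r)
              * ((c : ℂ) * z + d) ^ ((M : ℤ) - 1 - (k+1 : ℕ) - r)
              * iteratedDerivWithin r φ S (((a : ℂ) * z + b) / ((c : ℂ) * z + d))
            + (if r = 0 then 0 else
              (bolA M k (r-1) : ℂ) * (c : ℂ) ^ (k + 1 - r)
              * ((c : ℂ) * z + d) ^ ((M : ℤ) - 1 - (k+1 : ℕ) - r)
              * iteratedDerivWithin r φ S (((a : ℂ) * z + b) / ((c : ℂ) * z + d))) := by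
        intro r _
        by_cases h : r = 0
        · subst h
          simp only [bolA, if_true]
          push_cast
          ring
        · simp only [bolA, h, if_false]
          push_cast
          ring
      have e1 : ∑ r ∈ Finset.range (k+1+1),
            ((M : ℂ) - 1 - k - r) * (bolA M k r : ℂ) * (c : ℂ) ^ (k + 1 - r)
              * ((c : ℂ) * z + d) ^ ((M : ℤ) - 1 - (k+1 : ℕ) - r)
              * iteratedDerivWithin r φ S (((a : ℂ) * z + b) / ((c : ℂ) * z + d))
          = (∑ r ∈ Finset.range (k+1),
            ((M : ℂ) - 1 - k - r) * (bolA M k r : ℂ) * (c : ℂ) ^ (k + 1 - r)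
              * ((c : ℂ) * z + d) ^ ((M : ℤ) - 1 - (k+1 : ℕ) - r)
              * iteratedDerivWithin r φ S (((a : ℂ) * z + b) / ((c : ℂ) * z + d)))
            + ((M : ℂ) - 1 - k - (k+1 : ℕ)) * (bolA M k (k+1) : ℂ) * (c : ℂ) ^ (k + 1 - (k+1))
              * ((c : ℂ) * z + d) ^ ((M : ℤ) - 1 - (k+1 : ℕ) - (k+1 : ℕ))
              * iteratedDerivWithin (k+1) φ S (((a : ℂ) * z + b) / ((c : ℂ) * z + d)) :=
        Finset.sum_range_succ _ _
      have e2 : ∑ r ∈ Finset.range (k+1+1),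
            (if r = 0 then 0 else
              (bolA M k (r-1) : ℂ) * (c : ℂ) ^ (k + 1 - r)
              * ((c : ℂ) * z + d) ^ ((M : ℤ) - 1 - (k+1 : ℕ) - r)
              * iteratedDerivWithin r φ S (((a : ℂ) * z + b) / ((c : ℂ) * z + d)))
          = (∑ r ∈ Finset.range (k+1),
            (if r + 1 = 0 then 0 else
              (bolA M k (r+1-1) : ℂ) * (c : ℂ) ^ (k + 1 - (r+1))
              * ((c : ℂ) * z + d) ^ ((M : ℤ) - 1 - (k+1 : ℕ) - (r+1 : ℕ))
              * iteratedDerivWithin (r+1) φ S (((a : ℂ) * z + b) / ((c : ℂ) * z + d))))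
            + (if (0:ℕ) = 0 then 0 else
              (bolA M k (0-1) : ℂ) * (c : ℂ) ^ (k + 1 - 0)
              * ((c : ℂ) * z + d) ^ ((M : ℤ) - 1 - (k+1 : ℕ) - (0 : ℕ))
              * iteratedDerivWithin 0 φ S (((a : ℂ) * z + b) / ((c : ℂ) * z + d))) :=
        Finset.sum_range_succ' _ _
      rw [Finset.sum_congr rfl hR, Finset.sum_add_distrib, Finset.sum_add_distrib, e1, e2,
        bolA_zero M (Nat.lt_succ_self k)]
      simp only [if_pos rfl, Int.cast_zero, zero_mul, mul_zero, add_zero]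
      congr 1
      rw [if_pos trivial, add_zero]
      refine Finset.sum_congr rfl fun r hr => ?_
      rw [if_neg (Nat.succ_ne_zero r), Nat.add_sub_cancel]
  have hτS : τ ∈ S := hτ
  rw [main M hτS]
  rw [Finset.sum_eq_single_of_mem M (Finset.self_mem_range_succ M)]
  · rw [bolA_diag]
    have h1 : (M : ℤ) - 1 - (M : ℤ) - (M : ℤ) = -(M : ℤ) - 1 := by ring
    rw [h1]
    simp
  · intro r hr hne
    have hrM : r < M := by
      have := Finset.mem_range.mp hr; omega
    rw [bolA_final M hrM]
    simp
end

section
/- Suppose f : ℍ → ℂ satisfies f(τ) = (cτ+cN+d)^k · S(τ,N) for all integers N and τ in some fixed horizontal strip Im τ > y₀, where c ≠ 0, k > 1-M, and |S(τ,N)| ≥ α·N^{M-1} for some α > 0 and all large N (τ fixed). If f is bounded on the set {γ(τ+N) : N ∈ ℤ, N large} (e.g., because f extends continuously to the rational point a/c approached by γ(τ+N)), then we obtain a contradiction; hence no such bounded f exists. Formally: under these hypotheses, |f(γ(τ+N))| → ∞ as N → ∞, so f cannot be continuous from above at a/c. -/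
open Filter

/-- if `f(γ(τ+N)) = (cτ+cN+d)^k S(τ,N)` with `c ≠ 0`, `k > 1-M` and
`|S(τ,N)| ≥ α N^{M-1}`, then `|f(γ(τ+N))| → ∞` as `N → ∞`, so `f` has no limit along
the sequence `γ(τ+N) → a/c`; `f` cannot be continuous from above at `a/c`. -/
theorem stmt12 (a b c d : ℤ) (hdet : a * d - b * c = 1) (hc : c ≠ 0)
    (k : ℤ) (M : ℕ) (hM : 1 ≤ M) (hk : 1 - (M : ℤ) < k)
    (f : ℂ → ℂ) (τ : ℂ) (hτ : 0 < τ.im)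
    (S : ℤ → ℂ)
    (hrel : ∀ N : ℤ,
      f (((a : ℂ) * (τ + N) + b) / ((c : ℂ) * (τ + N) + d))
        = ((c : ℂ) * τ + (c : ℂ) * N + d) ^ k * S N)
    (α : ℝ) (hα : 0 < α) (N₁ : ℕ)
    (hS : ∀ N : ℕ, N₁ ≤ N → α * (N : ℝ) ^ (M - 1) ≤ ‖S (N : ℤ)‖) :
    Tendsto (fun N : ℕ => ‖f (((a : ℂ) * (τ + N) + b) / ((c : ℂ) * (τ + N) + d))‖)
        atTop atTop ∧
    ¬ ∃ L : ℂ, Tendsto (fun N : ℕ => f (((a : ℂ) * (τ + N) + b) / ((c : ℂ) * (τ + N) + d)))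
        atTop (nhds L) := by
  have hc' : (c : ℂ) ≠ 0 := by exact_mod_cast Int.cast_ne_zero.mpr hc
  have hcn : (0:ℝ) < ‖(c:ℂ)‖ := norm_pos_iff.mpr hc'
  -- q N = ‖cτ+cN+d‖ / N tends to ‖c‖
  have hinv : Tendsto (fun N : ℕ => ((N:ℂ))⁻¹) atTop (nhds 0) := by
    have h := tendsto_inv_atTop_nhds_zero_nat (𝕜 := ℝ)
    have h2 := (Complex.continuous_ofReal.tendsto 0).comp h
    have heq : (fun N : ℕ => ((N:ℂ))⁻¹) = Complex.ofReal ∘ fun n : ℕ => ((n:ℝ))⁻¹ := by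
      funext N; simp
    rw [heq]
    simpa using h2
  have h1 : Tendsto (fun N : ℕ => ((c:ℂ)*τ + (c:ℂ)*N + d) * ((N:ℂ))⁻¹) atTop
      (nhds (c:ℂ)) := by
    have h2 : Tendsto (fun N : ℕ => (c:ℂ) + ((c:ℂ)*τ + d) * (N:ℂ)⁻¹) atTop
        (nhds ((c:ℂ) + ((c:ℂ)*τ + d) * 0)) :=
      tendsto_const_nhds.add (tendsto_const_nhds.mul hinv)
    rw [mul_zero, add_zero] at h2
    apply h2.congr'
    filter_upwards [eventually_gt_atTop 0] with N hN
    have hN' : (N:ℂ) ≠ 0 := Nat.cast_ne_zero.mpr hN.ne'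
    field_simp
    ring
  have hq : Tendsto (fun N : ℕ => ‖(c:ℂ)*τ + (c:ℂ)*N + d‖ * ((N:ℝ))⁻¹) atTop
      (nhds ‖(c:ℂ)‖) := by
    have h2 := h1.norm
    simpa [norm_mul, norm_inv] using h2
  have hzpow : Tendsto (fun N : ℕ => (‖(c:ℂ)*τ + (c:ℂ)*N + d‖ * ((N:ℝ))⁻¹) ^ k) atTop
      (nhds (‖(c:ℂ)‖ ^ k)) := by
    have hcont : ContinuousAt (fun x : ℝ => x ^ k) ‖(c:ℂ)‖ :=
      continuousAt_zpow₀ _ _ (Or.inl hcn.ne')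
    exact hcont.tendsto.comp hq
  set ε : ℝ := ‖(c:ℂ)‖ ^ k / 2 with hε
  have hεpos : 0 < ε := by
    have := zpow_pos hcn k
    positivity
  have hev : ∀ᶠ N : ℕ in atTop, ε ≤ (‖(c:ℂ)*τ + (c:ℂ)*N + d‖ * ((N:ℝ))⁻¹) ^ k := by
    have hlt : ε < ‖(c:ℂ)‖ ^ k := by
      have := zpow_pos hcn k
      rw [hε]; linarith
    exact hzpow.eventually_const_le hlt
  -- main lower bound
  have hmain : Tendsto (fun N : ℕ => ‖f (((a : ℂ) * (τ + N) + b) / ((c : ℂ) * (τ + N) + d))‖)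
      atTop atTop := by
    apply tendsto_atTop_mono' atTop (f₁ := fun N : ℕ => ε * α * (N:ℝ))
    · filter_upwards [hev, eventually_ge_atTop N₁, eventually_ge_atTop 1] with N hN hN₁ hN1
      have hNpos : (0:ℝ) < (N:ℝ) := by exact_mod_cast hN1
      have hN0 : (N:ℝ) ≠ 0 := hNpos.ne'
      have hNr : (1:ℝ) ≤ (N:ℝ) := by exact_mod_cast hN1
      have hf := hrel (N : ℤ)
      have hcast : ((N : ℤ) : ℂ) = (N : ℂ) := by push_cast; ring
      rw [hcast] at hf
      rw [hf, norm_mul, norm_zpow]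
      set u : ℝ := ‖(c:ℂ)*τ + (c:ℂ)*N + d‖ with hu
      have hu0 : u ≠ 0 := by
        have : (c:ℂ)*τ + (c:ℂ)*N + d ≠ 0 := by
          intro h0
          have him : ((c:ℂ)*τ + (c:ℂ)*N + d).im = 0 := by rw [h0]; simp
          simp [Complex.add_im, Complex.mul_im] at him
          rcases him with h | h
          · exact hc (by exact_mod_cast h)
          · exact hτ.ne' h
        simpa [hu] using norm_ne_zero_iff.mpr this
      have hupos : 0 < u := lt_of_le_of_ne (norm_nonneg _) (Ne.symm hu0)
      have hsplit : u ^ k = (u * (N:ℝ)⁻¹) ^ k * (N:ℝ) ^ k := by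
        rw [← mul_zpow]
        field_simp
      have hSb := hS N hN₁
      have hqpos : 0 < (u * (N:ℝ)⁻¹) ^ k := zpow_pos (by positivity) k
      have hNk : (0:ℝ) < (N:ℝ) ^ k := zpow_pos hNpos k
      calc ε * α * (N:ℝ) ≤ ε * α * (N:ℝ) ^ (k + ((M-1 : ℕ) : ℤ)) := by
            have hexp : (1:ℤ) ≤ k + ((M-1 : ℕ) : ℤ) := by
              have : ((M-1 : ℕ) : ℤ) = (M:ℤ) - 1 := by
                have := hM; push_cast [Nat.cast_sub hM]; ring
              omega
            have := zpow_le_zpow_right₀ hNr hexp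
            simpa using mul_le_mul_of_nonneg_left this (by positivity : (0:ℝ) ≤ ε * α)
        _ = ε * (α * (N:ℝ) ^ (M-1)) * (N:ℝ) ^ k := by
            rw [zpow_add₀ hN0, zpow_natCast]; ring
        _ ≤ (u * (N:ℝ)⁻¹) ^ k * (α * (N:ℝ) ^ (M-1)) * (N:ℝ) ^ k := by
            apply mul_le_mul_of_nonneg_right _ hNk.le
            exact mul_le_mul_of_nonneg_right hN (by positivity)
        _ ≤ (u * (N:ℝ)⁻¹) ^ k * ‖S (N:ℤ)‖ * (N:ℝ) ^ k := by
            apply mul_le_mul_of_nonneg_right _ hNk.le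
            exact mul_le_mul_of_nonneg_left hSb hqpos.le
        _ = u ^ k * ‖S (N:ℤ)‖ := by rw [hsplit]; ring
    · have : Tendsto (fun N : ℕ => (N:ℝ)) atTop atTop := tendsto_natCast_atTop_atTop
      exact this.const_mul_atTop (by positivity)
  refine ⟨hmain, ?_⟩
  rintro ⟨L, hL⟩
  exact not_tendsto_nhds_of_tendsto_atTop hmain ‖L‖ hL.norm
end
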